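/- Let k ≥ 1 be an integer, C ≥ 0, and a₁,…,a_k ∈ ℝ, and define f(x) := Σ_{i=1}^{k} a_i 2^{−i x}. If |f(j)| ≤ C for every integer j with 1 ≤ j ≤ k, then |a_i| ≤ 30 · C · 2^{i k} for every i ∈ {1,…,k}. -/

import Mathlib

open Finset

lemma exists_coeffs (t : Finset ℕ) (y : ℕ → ℝ) :
    ∃ c : ℕ → ℝ,
      (∀ x : ℝ, ∏ m ∈ t, (x - y m) = ∑ j ∈ Finset.range (t.card + 1), c j * x ^ j) ∧
      (∀ j, t.card + 1 ≤ j → c j = 0) ∧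
      ∑ j ∈ Finset.range (t.card + 1), |c j| ≤ ∏ m ∈ t, (1 + |y m|) := by
  classical
  induction t using Finset.induction with
  | empty =>
      refine ⟨fun j => if j = 0 then 1 else 0, ?_, ?_, ?_⟩
      · intro x; simp
      · intro j hj; simp at hj ⊢; omega
      · simp
  | @insert a t ha ih =>
      obtain ⟨c, hid, hz, hl1⟩ := ih
      set n := t.card with hn
      have hcard : (insert a t).card = n + 1 := Finset.card_insert_of_notMem ha
      refine ⟨fun j => (if j = 0 then 0 else c (j - 1)) - y a * c j, ?_, ?_, ?_⟩
      · intro x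
        rw [Finset.prod_insert ha, hid x, hcard]
        have hshift : ∑ j ∈ Finset.range (n + 2),
            (if j = 0 then (0:ℝ) else c (j - 1)) * x ^ j
            = x * ∑ j ∈ Finset.range (n + 1), c j * x ^ j := by
          rw [Finset.sum_range_succ' (fun j => (if j = 0 then (0:ℝ) else c (j - 1)) * x ^ j) (n+1)]
          simp [Finset.mul_sum]
          ring_nf
          refine Finset.sum_congr rfl fun j hj => by ring
        have hc1 : c (n + 1) = 0 := hz _ (le_refl _)
        have : ∑ j ∈ Finset.range (n + 2), c j * x ^ j
            = ∑ j ∈ Finset.range (n + 1), c j * x ^ j := by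
          rw [Finset.sum_range_succ, hc1]; ring
        calc (x - y a) * ∑ j ∈ Finset.range (n + 1), c j * x ^ j
            = x * (∑ j ∈ Finset.range (n + 1), c j * x ^ j)
              - y a * ∑ j ∈ Finset.range (n + 2), c j * x ^ j := by rw [this]; ring
          _ = ∑ j ∈ Finset.range (n + 2),
              ((if j = 0 then (0:ℝ) else c (j - 1)) - y a * c j) * x ^ j := by
              rw [← hshift, Finset.mul_sum, ← Finset.sum_sub_distrib]
              refine Finset.sum_congr rfl fun j hj => by ring
      · intro j hj
        rw [hcard] at hj
        have h1 : c (j-1) = 0 := hz _ (by omega)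
        have h2 : c j = 0 := hz _ (by omega)
        simp [h1, h2, if_neg (by omega : ¬ j = 0)]
      · rw [Finset.prod_insert ha, hcard]
        have step : ∑ j ∈ Finset.range (n + 2),
            |(if j = 0 then (0:ℝ) else c (j - 1)) - y a * c j|
            ≤ ∑ j ∈ Finset.range (n + 2),
              (|if j = 0 then (0:ℝ) else c (j - 1)| + |y a| * |c j|) := by
          refine Finset.sum_le_sum fun j _ => ?_
          calc |(if j = 0 then (0:ℝ) else c (j - 1)) - y a * c j|
              ≤ |if j = 0 then (0:ℝ) else c (j - 1)| + |y a * c j| := abs_sub _ _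
            _ = _ := by rw [abs_mul]
        have hsh : ∑ j ∈ Finset.range (n + 2), |if j = 0 then (0:ℝ) else c (j - 1)|
            = ∑ j ∈ Finset.range (n + 1), |c j| := by
          rw [Finset.sum_range_succ' (fun j => |if j = 0 then (0:ℝ) else c (j - 1)|) (n+1)]
          simp
        have hc1 : c (n + 1) = 0 := hz _ (le_refl _)
        have htail : ∑ j ∈ Finset.range (n + 2), |y a| * |c j|
            = |y a| * ∑ j ∈ Finset.range (n + 1), |c j| := by
          rw [Finset.sum_range_succ, hc1]
          simp [Finset.mul_sum]
        calc ∑ j ∈ Finset.range (n + 2),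
              |(if j = 0 then (0:ℝ) else c (j - 1)) - y a * c j|
            ≤ ∑ j ∈ Finset.range (n + 1), |c j| + |y a| * ∑ j ∈ Finset.range (n + 1), |c j| := by
              rw [← hsh, ← htail, ← Finset.sum_add_distrib] at *; exact step
          _ = (1 + |y a|) * ∑ j ∈ Finset.range (n + 1), |c j| := by ring
          _ ≤ (1 + |y a|) * ∏ m ∈ t, (1 + |y m|) := by
              apply mul_le_mul_of_nonneg_left hl1; positivity


lemma prod_lower_aux : ∀ n : ℕ, (9765/32768 : ℝ) * (31/32 + ((2:ℝ)^(n+5))⁻¹)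
    ≤ ∏ d ∈ Finset.Icc 1 (n+5), (1 - ((2:ℝ)^d)⁻¹) := by
  intro n
  induction n with
  | zero =>
      rw [show Finset.Icc 1 5 = {1,2,3,4,5} from rfl]
      norm_num
  | succ n ih =>
      have h1 : (1:ℕ) ≤ n + 5 + 1 := by omega
      rw [show n + 1 + 5 = (n + 5) + 1 from by ring, Finset.prod_Icc_succ_top h1]
      have hε : (0:ℝ) < ((2:ℝ)^(n+5))⁻¹ := by positivity
      have hε2 : ((2:ℝ)^(n+5))⁻¹ ≤ 1/32 := by
        rw [show (1:ℝ)/32 = ((2:ℝ)^5)⁻¹ by norm_num]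
        apply inv_anti₀ (by positivity)
        apply pow_le_pow_right₀ (by norm_num) (by omega)
      have hsplit : ((2:ℝ)^(n+5+1))⁻¹ = ((2:ℝ)^(n+5))⁻¹ / 2 := by
        rw [pow_succ]; field_simp
      rw [hsplit]
      set ε := ((2:ℝ)^(n+5))⁻¹ with hεdef
      have hnn : (0:ℝ) ≤ ∏ d ∈ Finset.Icc 1 (n+5), (1 - ((2:ℝ)^d)⁻¹) - (9765/32768 : ℝ) * (31/32 + ε) := by linarith
      nlinarith [mul_nonneg hnn (by linarith : (0:ℝ) ≤ 1 - ε/2)]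
  
lemma prod_lower : ∀ K : ℕ, (283/1000 : ℝ) ≤ ∏ d ∈ Finset.Icc 1 K, (1 - ((2:ℝ)^d)⁻¹) := by
  intro K
  by_cases hK : K ≤ 4
  · interval_cases K
    · simp; norm_num
    · rw [show Finset.Icc 1 1 = {1} from rfl]; norm_num
    · rw [show Finset.Icc 1 2 = {1,2} from rfl]; norm_num
    · rw [show Finset.Icc 1 3 = {1,2,3} from rfl]; norm_num
    · rw [show Finset.Icc 1 4 = {1,2,3,4} from rfl]; norm_num
  · have : K = (K - 5) + 5 := by omega
    rw [this]
    refine le_trans ?_ (prod_lower_aux (K - 5))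
    have : (0:ℝ) < ((2:ℝ)^(K-5+5))⁻¹ := by positivity
    nlinarith

lemma prod_upper_aux : ∀ n : ℕ, ∏ d ∈ Finset.Icc 1 (n+5), (1 + ((2:ℝ)^d)⁻¹)
    ≤ (12/5 : ℝ) * (1 - ((2:ℝ)^(n+5))⁻¹) := by
  intro n
  induction n with
  | zero =>
      rw [show Finset.Icc 1 5 = {1,2,3,4,5} from rfl]
      norm_num
  | succ n ih =>
      have h1 : (1:ℕ) ≤ n + 5 + 1 := by omega
      rw [show n + 1 + 5 = (n + 5) + 1 from by ring, Finset.prod_Icc_succ_top h1]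
      have hε : (0:ℝ) < ((2:ℝ)^(n+5))⁻¹ := by positivity
      have hε1 : ((2:ℝ)^(n+5))⁻¹ ≤ 1 := by
        rw [show (1:ℝ) = ((2:ℝ)^0)⁻¹ by norm_num]
        apply inv_anti₀ (by positivity)
        apply pow_le_pow_right₀ (by norm_num) (by omega)
      have hsplit : ((2:ℝ)^(n+5+1))⁻¹ = ((2:ℝ)^(n+5))⁻¹ / 2 := by
        rw [pow_succ]; field_simp
      rw [hsplit]
      set ε := ((2:ℝ)^(n+5))⁻¹ with hεdef
      have hP : (0:ℝ) ≤ ∏ d ∈ Finset.Icc 1 (n+5), (1 + ((2:ℝ)^d)⁻¹) := by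
        apply Finset.prod_nonneg; intro d _; positivity
      nlinarith [mul_nonneg (by linarith : (0:ℝ) ≤ (12/5:ℝ)*(1-ε) - ∏ d ∈ Finset.Icc 1 (n+5), (1 + ((2:ℝ)^d)⁻¹)) (by linarith : (0:ℝ) ≤ 1 + ε/2)]

lemma prod_upper : ∀ K : ℕ, ∏ d ∈ Finset.Icc 1 K, (1 + ((2:ℝ)^d)⁻¹) ≤ (12/5 : ℝ) := by
  intro K
  by_cases hK : K ≤ 4
  · interval_cases K
    · simp; norm_num
    · rw [show Finset.Icc 1 1 = {1} from rfl]; norm_num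
    · rw [show Finset.Icc 1 2 = {1,2} from rfl]; norm_num
    · rw [show Finset.Icc 1 3 = {1,2,3} from rfl]; norm_num
    · rw [show Finset.Icc 1 4 = {1,2,3,4} from rfl]; norm_num
  · have : K = (K - 5) + 5 := by omega
    rw [this]
    refine le_trans (prod_upper_aux (K - 5)) ?_
    have : (0:ℝ) < ((2:ℝ)^(K-5+5))⁻¹ := by positivity
    nlinarith



lemma prod_estimate (k i : ℕ) (hi1 : 1 ≤ i) (hik : i ≤ k) :
    (2:ℝ)^i * ∏ m ∈ (Finset.Icc 1 k).erase i, (1 + ((2:ℝ)^m)⁻¹)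
      ≤ 30 * 2^(i*k) * ∏ m ∈ (Finset.Icc 1 k).erase i, |((2:ℝ)^i)⁻¹ - ((2:ℝ)^m)⁻¹| := by
  -- split the erased interval
  have hsplit : (Finset.Icc 1 k).erase i = Finset.Icc 1 (i-1) ∪ Finset.Icc (i+1) k := by
    ext m
    simp only [Finset.mem_erase, Finset.mem_Icc, Finset.mem_union]
    omega
  have hdisj : Disjoint (Finset.Icc 1 (i-1)) (Finset.Icc (i+1) k) := by
    rw [Finset.disjoint_left]
    intro m hm hm'
    simp only [Finset.mem_Icc] at hm hm'
    omega
  -- lower bound for the product of |x_i - x_m| over the left part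
  have hleft : ∀ m ∈ Finset.Icc 1 (i-1),
      |((2:ℝ)^i)⁻¹ - ((2:ℝ)^m)⁻¹| = ((2:ℝ)^m)⁻¹ * (1 - ((2:ℝ)^(i-m))⁻¹) := by
    intro m hm
    simp only [Finset.mem_Icc] at hm
    have hmi : m ≤ i := by omega
    have hpow : (2:ℝ)^(i-m) * (2:ℝ)^m = (2:ℝ)^i := by
      rw [← pow_add]; congr 1; omega
    have h2m : (0:ℝ) < (2:ℝ)^m := by positivity
    have h2i : (0:ℝ) < (2:ℝ)^i := by positivity
    have h2im : (0:ℝ) < (2:ℝ)^(i-m) := by positivity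
    rw [abs_sub_comm, abs_of_nonneg]
    · field_simp
      nlinarith [hpow]
    · have : ((2:ℝ)^i)⁻¹ ≤ ((2:ℝ)^m)⁻¹ := by
        apply inv_anti₀ h2m
        apply pow_le_pow_right₀ (by norm_num) hmi
      linarith
  have hright : ∀ m ∈ Finset.Icc (i+1) k,
      |((2:ℝ)^i)⁻¹ - ((2:ℝ)^m)⁻¹| = ((2:ℝ)^i)⁻¹ * (1 - ((2:ℝ)^(m-i))⁻¹) := by
    intro m hm
    simp only [Finset.mem_Icc] at hm
    have him : i ≤ m := by omega
    have hpow : (2:ℝ)^(m-i) * (2:ℝ)^i = (2:ℝ)^m := by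
      rw [← pow_add]; congr 1; omega
    have h2m : (0:ℝ) < (2:ℝ)^m := by positivity
    have h2i : (0:ℝ) < (2:ℝ)^i := by positivity
    have h2im : (0:ℝ) < (2:ℝ)^(m-i) := by positivity
    rw [abs_of_nonneg]
    · field_simp
      nlinarith [hpow]
    · have : ((2:ℝ)^m)⁻¹ ≤ ((2:ℝ)^i)⁻¹ := by
        apply inv_anti₀ h2i
        apply pow_le_pow_right₀ (by norm_num) him
      linarith
  -- reindexing
  have hreL : ∏ m ∈ Finset.Icc 1 (i-1), (1 - ((2:ℝ)^(i-m))⁻¹)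
      = ∏ d ∈ Finset.Icc 1 (i-1), (1 - ((2:ℝ)^d)⁻¹) := by
    apply Finset.prod_nbij' (fun m => i - m) (fun d => i - d)
    · intro m hm; simp only [Finset.mem_Icc] at *; omega
    · intro d hd; simp only [Finset.mem_Icc] at *; omega
    · intro m hm; simp only [Finset.mem_Icc] at hm; omega
    · intro d hd; simp only [Finset.mem_Icc] at hd; omega
    · intro m hm; rfl
  have hreR : ∏ m ∈ Finset.Icc (i+1) k, (1 - ((2:ℝ)^(m-i))⁻¹)
      = ∏ d ∈ Finset.Icc 1 (k-i), (1 - ((2:ℝ)^d)⁻¹) := by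
    apply Finset.prod_nbij' (fun m => m - i) (fun d => d + i)
    · intro m hm; simp only [Finset.mem_Icc] at *; omega
    · intro d hd; simp only [Finset.mem_Icc] at *; omega
    · intro m hm; simp only [Finset.mem_Icc] at hm; omega
    · intro d hd; simp only [Finset.mem_Icc] at hd; omega
    · intro m hm; rfl
  -- set S1
  set S1 : ℕ := ∑ m ∈ Finset.Icc 1 (i-1), m with hS1def
  have hprodL : ∏ m ∈ Finset.Icc 1 (i-1), |((2:ℝ)^i)⁻¹ - ((2:ℝ)^m)⁻¹|
      ≥ ((2:ℝ)^S1)⁻¹ * (283/1000) := by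
    rw [Finset.prod_congr rfl hleft, Finset.prod_mul_distrib, hreL]
    have h1 : ∏ m ∈ Finset.Icc 1 (i-1), ((2:ℝ)^m)⁻¹ = ((2:ℝ)^S1)⁻¹ := by
      rw [Finset.prod_inv_distrib, Finset.prod_pow_eq_pow_sum]
    rw [h1]
    have := prod_lower (i-1)
    have hpos : (0:ℝ) < ((2:ℝ)^S1)⁻¹ := by positivity
    nlinarith
  have hprodR : ∏ m ∈ Finset.Icc (i+1) k, |((2:ℝ)^i)⁻¹ - ((2:ℝ)^m)⁻¹|
      ≥ ((2:ℝ)^(i*(k-i)))⁻¹ * (283/1000) := by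
    rw [Finset.prod_congr rfl hright, Finset.prod_mul_distrib, hreR]
    have hcard : (Finset.Icc (i+1) k).card = k - i := by
      rw [Nat.card_Icc]; omega
    have h1 : ∏ m ∈ Finset.Icc (i+1) k, ((2:ℝ)^i)⁻¹ = ((2:ℝ)^(i*(k-i)))⁻¹ := by
      rw [Finset.prod_const, hcard, inv_pow, ← pow_mul]
    rw [h1]
    have := prod_lower (k-i)
    have hpos : (0:ℝ) < ((2:ℝ)^(i*(k-i)))⁻¹ := by positivity
    nlinarith
  -- upper bound for LHS product
  have hup : ∏ m ∈ (Finset.Icc 1 k).erase i, (1 + ((2:ℝ)^m)⁻¹) ≤ 12/5 := by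
    refine le_trans ?_ (prod_upper k)
    have hmem : i ∈ Finset.Icc 1 k := Finset.mem_Icc.mpr ⟨hi1, hik⟩
    have hME := Finset.mul_prod_erase (Finset.Icc 1 k) (fun m => 1 + ((2:ℝ)^m)⁻¹) hmem
    have hone : (1:ℝ) ≤ 1 + ((2:ℝ)^i)⁻¹ := by
      have : (0:ℝ) < ((2:ℝ)^i)⁻¹ := by positivity
      linarith
    have hnn : (0:ℝ) ≤ ∏ m ∈ (Finset.Icc 1 k).erase i, (1 + ((2:ℝ)^m)⁻¹) :=
      Finset.prod_nonneg (fun m _ => by positivity)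
    nlinarith [hME]
  -- nat exponent inequality
  have hS1le : S1 ≤ (i-1) * (i-1) := by
    rw [hS1def]
    calc ∑ m ∈ Finset.Icc 1 (i-1), m ≤ ∑ m ∈ Finset.Icc 1 (i-1), (i-1) :=
          Finset.sum_le_sum (fun m hm => by simp only [Finset.mem_Icc] at hm; omega)
      _ = (i-1) * (i-1) := by rw [Finset.sum_const, Nat.card_Icc, smul_eq_mul]; congr 1 <;> try omega
  have hexp : i + S1 + i * (k - i) ≤ i * k := by
    have e : i * (k - i) + i * i = i * k := by
      rw [← Nat.mul_add]; congr 1; omega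
    obtain ⟨j, rfl⟩ := Nat.exists_eq_add_of_le hi1
    have hS1le' : S1 ≤ j * j := by
      have : 1 + j - 1 = j := by omega
      rwa [this] at hS1le
    nlinarith [e, hS1le']
  have hrealexp : (2:ℝ)^i * (2:ℝ)^S1 * (2:ℝ)^(i*(k-i)) ≤ (2:ℝ)^(i*k) := by
    rw [← pow_add, ← pow_add]
    apply pow_le_pow_right₀ (by norm_num) hexp
  have hup' : (∏ m ∈ Finset.Icc 1 (i-1), (1 + ((2:ℝ)^m)⁻¹)) * ∏ m ∈ Finset.Icc (i+1) k, (1 + ((2:ℝ)^m)⁻¹) ≤ 12/5 := by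
    rw [← Finset.prod_union hdisj, ← hsplit]; exact hup
  have h2i : (0:ℝ) < (2:ℝ)^i := by positivity
  have hT : (0:ℝ) < (2:ℝ)^(i*k) := by positivity
  have h3 : (2:ℝ)^i ≤ 2^(i*k) / ((2:ℝ)^S1 * (2:ℝ)^(i*(k-i))) := by
    rw [le_div_iff₀ (by positivity)]
    calc (2:ℝ)^i * ((2:ℝ)^S1 * (2:ℝ)^(i*(k-i))) = 2^i * 2^S1 * 2^(i*(k-i)) := by ring
      _ ≤ _ := hrealexp
  have hqA : (0:ℝ) < ((2:ℝ)^S1)⁻¹ * (283/1000) := by positivity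
  have hqB : (0:ℝ) < ((2:ℝ)^(i*(k-i)))⁻¹ * (283/1000) := by positivity
  have step2 : (2:ℝ)^i * (12/5) ≤ 30 * (2:ℝ)^(i*k) *
      ((((2:ℝ)^S1)⁻¹ * (283/1000)) * (((2:ℝ)^(i*(k-i)))⁻¹ * (283/1000))) := by
    have hRHSeq : 30 * (2:ℝ)^(i*k) *
        ((((2:ℝ)^S1)⁻¹ * (283/1000)) * (((2:ℝ)^(i*(k-i)))⁻¹ * (283/1000)))
        = (30*(283/1000)^2) * ((2:ℝ)^(i*k) / ((2:ℝ)^S1 * (2:ℝ)^(i*(k-i)))) := by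
      field_simp
    rw [hRHSeq]
    nlinarith [mul_le_mul_of_nonneg_left h3 (show (0:ℝ) ≤ 30*(283/1000)^2 by norm_num), h2i]
  rw [hsplit, Finset.prod_union hdisj, Finset.prod_union hdisj]
  have hQL : (0:ℝ) ≤ ∏ m ∈ Finset.Icc 1 (i-1), |((2:ℝ)^i)⁻¹ - ((2:ℝ)^m)⁻¹| :=
    Finset.prod_nonneg (fun m _ => abs_nonneg _)
  calc (2:ℝ)^i * ((∏ m ∈ Finset.Icc 1 (i-1), (1 + ((2:ℝ)^m)⁻¹)) * ∏ m ∈ Finset.Icc (i+1) k, (1 + ((2:ℝ)^m)⁻¹))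
      ≤ (2:ℝ)^i * (12/5) := mul_le_mul_of_nonneg_left hup' (le_of_lt h2i)
    _ ≤ 30 * (2:ℝ)^(i*k) *
        ((((2:ℝ)^S1)⁻¹ * (283/1000)) * (((2:ℝ)^(i*(k-i)))⁻¹ * (283/1000))) := step2
    _ ≤ 30 * (2:ℝ)^(i*k) *
        ((∏ m ∈ Finset.Icc 1 (i-1), |((2:ℝ)^i)⁻¹ - ((2:ℝ)^m)⁻¹|) *
         ∏ m ∈ Finset.Icc (i+1) k, |((2:ℝ)^i)⁻¹ - ((2:ℝ)^m)⁻¹|) := by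
        apply mul_le_mul_of_nonneg_left _ (by positivity)
        exact mul_le_mul hprodL hprodR (le_of_lt hqB) hQL


/-- If `f(x) = ∑_{i=1}^k a_i 2^{-i x}` satisfies `|f(j)| ≤ C` at every integer
`1 ≤ j ≤ k`, then each coefficient satisfies `|a_i| ≤ 30 · C · 2^{i k}`. -/
theorem coeff_bound_from_integer_values (k : ℕ) (hk : 1 ≤ k) (C : ℝ) (hC : 0 ≤ C)
    (a : ℕ → ℝ)
    (h : ∀ j ∈ Finset.Icc 1 k,
      |∑ i ∈ Finset.Icc 1 k, a i * ((2 : ℝ) ^ (i * j))⁻¹| ≤ C) :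
    ∀ i ∈ Finset.Icc 1 k, |a i| ≤ 30 * C * 2 ^ (i * k) := by
  intro i hi
  rw [Finset.mem_Icc] at hi
  obtain ⟨hi1, hik⟩ := hi
  classical
  have hmem : i ∈ Finset.Icc 1 k := Finset.mem_Icc.mpr ⟨hi1, hik⟩
  set t := (Finset.Icc 1 k).erase i with ht
  obtain ⟨c, hid, hz, hl1⟩ := exists_coeffs t (fun m => ((2:ℝ)^m)⁻¹)
  have hcard : t.card + 1 = k := by
    rw [ht, Finset.card_erase_of_mem hmem, Nat.card_Icc]
    omega
  rw [hcard] at hid hl1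
  set D : ℝ := ∏ m ∈ t, (((2:ℝ)^i)⁻¹ - ((2:ℝ)^m)⁻¹) with hD
  set P : ℝ := ∏ m ∈ t, (1 + ((2:ℝ)^m)⁻¹) with hP
  have hl1' : ∑ j ∈ Finset.range k, |c j| ≤ P := by
    refine le_trans hl1 (le_of_eq (Finset.prod_congr rfl fun m _ => ?_))
    rw [abs_of_nonneg (by positivity)]
  -- key identity
  have hmono : StrictMono (fun n : ℕ => (2:ℝ)^n) := fun m n hmn => by
    exact pow_lt_pow_right₀ one_lt_two hmn
  have hDpos : 0 < |D| := by
    rw [hD, abs_prod]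
    apply Finset.prod_pos
    intro m hm
    rw [abs_pos]
    intro hzero
    have hne : m ≠ i := (Finset.mem_erase.mp hm).1
    have heq : ((2:ℝ)^i)⁻¹ = ((2:ℝ)^m)⁻¹ := by linarith
    rw [inv_inj] at heq
    exact hne (hmono.injective heq).symm
  have key : a i * ((2:ℝ)^i)⁻¹ * D
      = ∑ j ∈ Finset.range k, c j * ∑ m ∈ Finset.Icc 1 k, a m * ((2:ℝ)^(m*(j+1)))⁻¹ := by
    have hsum : ∑ m ∈ Finset.Icc 1 k,
        a m * ((2:ℝ)^m)⁻¹ * ∏ n ∈ t, (((2:ℝ)^m)⁻¹ - ((2:ℝ)^n)⁻¹)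
        = a i * ((2:ℝ)^i)⁻¹ * D := by
      rw [hD]
      apply Finset.sum_eq_single_of_mem i hmem
      intro m hm hne
      have hmt : m ∈ t := by rw [ht]; exact Finset.mem_erase.mpr ⟨hne, hm⟩
      rw [Finset.prod_eq_zero hmt (by ring), mul_zero]
    rw [← hsum]
    have hterm : ∀ m ∈ Finset.Icc 1 k,
        a m * ((2:ℝ)^m)⁻¹ * ∏ n ∈ t, (((2:ℝ)^m)⁻¹ - ((2:ℝ)^n)⁻¹)
        = ∑ j ∈ Finset.range k, c j * (a m * ((2:ℝ)^(m*(j+1)))⁻¹) := by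
      intro m _
      rw [hid (((2:ℝ)^m)⁻¹), Finset.mul_sum]
      refine Finset.sum_congr rfl fun j _ => ?_
      have hpow : ((2:ℝ)^m)⁻¹ * (((2:ℝ)^m)⁻¹)^j = ((2:ℝ)^(m*(j+1)))⁻¹ := by
        rw [← pow_succ', inv_pow, ← pow_mul]
      calc a m * ((2:ℝ)^m)⁻¹ * (c j * (((2:ℝ)^m)⁻¹)^j)
          = c j * (a m * (((2:ℝ)^m)⁻¹ * (((2:ℝ)^m)⁻¹)^j)) := by ring
        _ = c j * (a m * ((2:ℝ)^(m*(j+1)))⁻¹) := by rw [hpow]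
    rw [Finset.sum_congr rfl hterm, Finset.sum_comm]
    exact Finset.sum_congr rfl fun j _ => by rw [Finset.mul_sum]
  -- bound the sum
  have habs : |a i| * (((2:ℝ)^i)⁻¹ * |D|) ≤ C * P := by
    have h1 : |a i * ((2:ℝ)^i)⁻¹ * D| ≤ ∑ j ∈ Finset.range k, |c j| * C := by
      rw [key]
      refine le_trans (Finset.abs_sum_le_sum_abs _ _) (Finset.sum_le_sum fun j hj => ?_)
      rw [abs_mul]
      apply mul_le_mul_of_nonneg_left _ (abs_nonneg _)
      apply h
      rw [Finset.mem_range] at hj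
      rw [Finset.mem_Icc]
      omega
    have h2 : ∑ j ∈ Finset.range k, |c j| * C ≤ C * P := by
      rw [← Finset.sum_mul]
      calc (∑ j ∈ Finset.range k, |c j|) * C ≤ P * C :=
            mul_le_mul_of_nonneg_right hl1' hC
        _ = C * P := by ring
    calc |a i| * (((2:ℝ)^i)⁻¹ * |D|)
        = |a i * ((2:ℝ)^i)⁻¹ * D| := by
          rw [abs_mul, abs_mul, abs_of_nonneg (show (0:ℝ) ≤ ((2:ℝ)^i)⁻¹ by positivity)]
          ring
      _ ≤ _ := le_trans h1 h2
  have hest := prod_estimate k i hi1 hik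
  rw [← ht] at hest
  have hDabs : ∏ m ∈ t, |((2:ℝ)^i)⁻¹ - ((2:ℝ)^m)⁻¹| = |D| := by
    rw [hD, abs_prod]
  rw [hDabs, ← hP] at hest
  -- combine
  have h2i : (0:ℝ) < (2:ℝ)^i := by positivity
  have hfinal : |a i| * |D| ≤ 30 * C * 2^(i*k) * |D| := by
    have e1 : |a i| * |D| = (|a i| * (((2:ℝ)^i)⁻¹ * |D|)) * (2:ℝ)^i := by
      field_simp
    calc |a i| * |D| = (|a i| * (((2:ℝ)^i)⁻¹ * |D|)) * (2:ℝ)^i := e1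
      _ ≤ (C * P) * (2:ℝ)^i := mul_le_mul_of_nonneg_right habs (le_of_lt h2i)
      _ = C * ((2:ℝ)^i * P) := by ring
      _ ≤ C * (30 * 2^(i*k) * |D|) := mul_le_mul_of_nonneg_left hest hC
      _ = 30 * C * 2^(i*k) * |D| := by ring
  exact le_of_mul_le_mul_right hfinal hDpos
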